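/- In the ILT model, if the initial connected graph G_0 is not a complete graph, then diam(G_t) = diam(G_0) for all t ≥ 0; if G_0 is a complete graph with at least two vertices, then diam(G_t) = 2 for all t ≥ 1. -/

import Mathlib

open SimpleGraph Finset

universe u
variable {V : Type u}

/-- One step of the Iterated Local Transitivity model: every vertex `x` gets a
clone `Sum.inr x` joined to `x` and all of its neighbours; old vertices are `Sum.inl`. -/
def ILTstep (G : SimpleGraph V) : SimpleGraph (V ⊕ V) where
  Adj a b := match a, b with
    | Sum.inl x, Sum.inl y => G.Adj x y
    | Sum.inl x, Sum.inr y => x = y ∨ G.Adj x y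
    | Sum.inr x, Sum.inl y => x = y ∨ G.Adj x y
    | Sum.inr _, Sum.inr _ => False
  symm := by
    constructor
    rintro (x | x) (y | y) h
    · exact G.adj_symm h
    · exact h.imp Eq.symm (fun hh => G.adj_symm hh)
    · exact h.imp Eq.symm (fun hh => G.adj_symm hh)
    · exact h.elim
  loopless := by
    constructor
    rintro (x | x) h
    · exact G.irrefl h
    · exact h

instance ILTstepDecAdj (G : SimpleGraph V) [DecidableEq V] [DecidableRel G.Adj] :
    DecidableRel (ILTstep G).Adj := fun a b =>
  match a, b with
  | Sum.inl x, Sum.inl y => inferInstanceAs (Decidable (G.Adj x y))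
  | Sum.inl x, Sum.inr y => inferInstanceAs (Decidable (x = y ∨ G.Adj x y))
  | Sum.inr x, Sum.inl y => inferInstanceAs (Decidable (x = y ∨ G.Adj x y))
  | Sum.inr _, Sum.inr _ => inferInstanceAs (Decidable False)

/-- The vertex set of the ILT model at time `t`. -/
def ILTV (V : Type u) : ℕ → Type u
  | 0 => V
  | t + 1 => ILTV V t ⊕ ILTV V t

/-- The graph of the ILT model at time `t`, starting from `G`. -/
def ILTG (G : SimpleGraph V) : (t : ℕ) → SimpleGraph (ILTV V t)
  | 0 => G
  | t + 1 => ILTstep (ILTG G t)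

instance ILTVFintype [Fintype V] : ∀ t, Fintype (ILTV V t)
  | 0 => inferInstanceAs (Fintype V)
  | t + 1 => letI := ILTVFintype t
             inferInstanceAs (Fintype (ILTV V t ⊕ ILTV V t))

instance ILTVDecEq [DecidableEq V] : ∀ t, DecidableEq (ILTV V t)
  | 0 => inferInstanceAs (DecidableEq V)
  | t + 1 => letI := ILTVDecEq t
             inferInstanceAs (DecidableEq (ILTV V t ⊕ ILTV V t))

instance ILTGDecAdj (G : SimpleGraph V) [DecidableEq V] [DecidableRel G.Adj] :
    ∀ t, DecidableRel (ILTG G t).Adj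
  | 0 => inferInstanceAs (DecidableRel G.Adj)
  | t + 1 => letI : DecidableEq (ILTV V t) := ILTVDecEq t
             letI : DecidableRel (ILTG G t).Adj := ILTGDecAdj G t
             ILTstepDecAdj (ILTG G t)

/-- The volume of a graph: the sum of the degrees of its vertices. -/
def graphVol [Fintype V] (G : SimpleGraph V) [DecidableRel G.Adj] : ℕ :=
  ∑ v, G.degree v

/-- The Wiener index: the sum of distances over unordered pairs of vertices. -/
noncomputable def wienerIndex [Fintype V] (G : SimpleGraph V) : ℕ :=
  (∑ x : V, ∑ y : V, G.dist x y) / 2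

section Aux
variable {G : SimpleGraph V}

/-- The projection homomorphism-up-to-equality. -/
def ILTp : V ⊕ V → V := Sum.elim id id

def ILThoml (G : SimpleGraph V) : G →g ILTstep G := ⟨Sum.inl, fun {a b} h => h⟩

lemma ILT_proj_walk : ∀ {a b : V ⊕ V} (w : (ILTstep G).Walk a b),
    ∃ w2 : G.Walk (ILTp a) (ILTp b), w2.length ≤ w.length := by
  intro a b w
  induction w with
  | nil => exact ⟨SimpleGraph.Walk.nil, le_refl _⟩
  | @cons a c b h _ ih =>
    obtain ⟨w2, hw2⟩ := ih
    have h' : ILTp a = ILTp c ∨ G.Adj (ILTp a) (ILTp c) := by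
      rcases a with x | x <;> rcases c with y | y <;> simp_all [ILTstep, ILTp]
    rcases h' with he | ha
    · exact ⟨w2.copy he.symm rfl, by simpa using hw2.trans (Nat.le_succ _)⟩
    · exact ⟨SimpleGraph.Walk.cons ha w2, by simpa using hw2⟩

lemma ILT_lift_inr : ∀ {x y : V} (w : G.Walk x y), w.length ≠ 0 →
    ∃ w' : (ILTstep G).Walk (Sum.inl x) (Sum.inr y), w'.length = w.length
  | _, _, SimpleGraph.Walk.nil, hw => absurd rfl hw
  | _, _, SimpleGraph.Walk.cons h SimpleGraph.Walk.nil, _ =>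
      ⟨SimpleGraph.Walk.cons (show (ILTstep G).Adj (Sum.inl _) (Sum.inr _) from Or.inr h)
        SimpleGraph.Walk.nil, rfl⟩
  | _, _, SimpleGraph.Walk.cons h (SimpleGraph.Walk.cons h2 rest), _ => by
      obtain ⟨w', hw'⟩ := ILT_lift_inr (SimpleGraph.Walk.cons h2 rest) (by simp)
      exact ⟨SimpleGraph.Walk.cons (show (ILTstep G).Adj (Sum.inl _) (Sum.inl _) from h) w',
        by simp [hw']⟩

lemma ILT_connected (hc : G.Connected) : (ILTstep G).Connected := by
  have hne : Nonempty V := hc.nonempty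
  haveI : Nonempty (V ⊕ V) := ⟨Sum.inl hne.some⟩
  refine ⟨fun a b => ?_⟩
  have key : ∀ c : V ⊕ V, (ILTstep G).Reachable c (Sum.inl (ILTp c)) := by
    rintro (x | x)
    · exact Reachable.refl _
    · exact (SimpleGraph.Adj.reachable (show (ILTstep G).Adj (Sum.inr x) (Sum.inl x) from
        Or.inl rfl))
  exact (key a).trans ((Reachable.map (ILThoml G) (hc.preconnected _ _)).trans (key b).symm)

lemma ILT_edist_lower (a b : V ⊕ V) :
    G.edist (ILTp a) (ILTp b) ≤ (ILTstep G).edist a b := by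
  by_cases hr : (ILTstep G).Reachable a b
  · obtain ⟨w, hw⟩ := hr.exists_walk_length_eq_edist
    obtain ⟨w2, hw2⟩ := ILT_proj_walk w
    exact (edist_le w2).trans (by exact_mod_cast hw ▸ Nat.cast_le.mpr hw2)
  · simp [edist_eq_top_of_not_reachable hr]

lemma ILT_edist_inl_inr (hc : G.Connected) (x y : V) :
    (ILTstep G).edist (Sum.inl x) (Sum.inr y) ≤ max G.ediam 2 := by
  by_cases hxy : x = y
  · subst hxy
    calc (ILTstep G).edist (Sum.inl x) (Sum.inr x) ≤ 1 :=
          le_of_eq (edist_eq_one_iff_adj.mpr (Or.inl rfl))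
      _ ≤ max G.ediam 2 := le_max_of_le_right (by norm_num)
  · obtain ⟨w, hw⟩ := (hc.preconnected x y).exists_walk_length_eq_edist
    have hw0 : w.length ≠ 0 := by
      intro h0
      exact hxy (edist_eq_zero_iff.mp (by rw [← hw, h0]; rfl))
    obtain ⟨w', hw'⟩ := ILT_lift_inr w hw0
    calc (ILTstep G).edist (Sum.inl x) (Sum.inr y) ≤ w'.length := edist_le w'
      _ = G.edist x y := by rw [hw', hw]
      _ ≤ max G.ediam 2 := le_max_of_le_left edist_le_ediam

lemma ILT_edist_le (hc : G.Connected) (a b : V ⊕ V) :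
    (ILTstep G).edist a b ≤ max G.ediam 2 := by
  rcases a with x | x <;> rcases b with y | y
  · calc (ILTstep G).edist (Sum.inl x) (Sum.inl y) ≤ G.edist x y := by
          obtain ⟨w, hw⟩ := (hc.preconnected x y).exists_walk_length_eq_edist
          exact (edist_le (w.map (ILThoml G))).trans
            (by rw [SimpleGraph.Walk.length_map]; exact le_of_eq hw)
      _ ≤ max G.ediam 2 := le_max_of_le_left edist_le_ediam
  · exact ILT_edist_inl_inr hc x y
  · rw [edist_comm]; exact ILT_edist_inl_inr hc y x
  · by_cases hxy : x = y
    · subst hxy; simp [edist_self]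
    · by_cases hadj : G.Adj x y
      · refine le_trans (edist_le (SimpleGraph.Walk.cons
            (show (ILTstep G).Adj (Sum.inr x) (Sum.inl x) from Or.inl rfl)
            (SimpleGraph.Walk.cons
              (show (ILTstep G).Adj (Sum.inl x) (Sum.inr y) from Or.inr hadj)
              SimpleGraph.Walk.nil))) ?_
        exact le_max_of_le_right (by norm_num)
      · obtain ⟨w, hw⟩ := (hc.preconnected x y).exists_walk_length_eq_edist
        cases w with
        | nil => exact absurd rfl hxy
        | @cons _ z _ h rest =>
          have hr0 : rest.length ≠ 0 := by
            intro h0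
            have : z = y := SimpleGraph.Walk.eq_of_length_eq_zero h0
            subst this
            exact hadj h
          obtain ⟨w'', hw''⟩ := ILT_lift_inr rest hr0
          have hstep : (ILTstep G).Adj (Sum.inr x) (Sum.inl z) := Or.inr h
          calc (ILTstep G).edist (Sum.inr x) (Sum.inr y)
              ≤ (SimpleGraph.Walk.cons hstep w'').length := edist_le _
            _ = G.edist x y := by
                rw [← hw]; simp [hw'']
            _ ≤ max G.ediam 2 := le_max_of_le_left edist_le_ediam

lemma two_le_enat {n : ℕ∞} (h0 : n ≠ 0) (h1 : n ≠ 1) : 2 ≤ n := by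
  cases n with
  | top => exact le_top
  | coe m =>
    have : m ≠ 0 := by exact_mod_cast h0
    have : m ≠ 1 := by exact_mod_cast h1
    exact_mod_cast by omega

lemma ILT_ediam_step (hc : G.Connected) (h2 : 2 ≤ G.ediam) :
    (ILTstep G).ediam = G.ediam := by
  refine le_antisymm (ediam_le_of_edist_le fun a b =>
    (ILT_edist_le hc a b).trans (by rw [max_eq_left h2])) ?_
  refine ediam_le_of_edist_le fun x y => ?_
  exact (ILT_edist_lower (Sum.inl x) (Sum.inl y)).trans edist_le_ediam

lemma ILT_ediam_complete [Nontrivial V] (hc : G.Connected) (hG : G = ⊤) :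
    (ILTstep G).ediam = 2 := by
  refine le_antisymm (ediam_le_of_edist_le fun a b =>
    (ILT_edist_le hc a b).trans (by rw [hG, ediam_top]; norm_num)) ?_
  obtain ⟨x, y, hxy⟩ := exists_pair_ne V
  refine le_trans ?_ (edist_le_ediam (u := Sum.inr x) (v := Sum.inr y))
  refine two_le_enat ?_ ?_
  · rw [Ne, edist_eq_zero_iff]
    simp [hxy]
  · rw [Ne, edist_eq_one_iff_adj]
    exact fun h => h.elim

end Aux

section Main
variable {G : SimpleGraph V}

lemma ILT_invariant_ne_top (hc : G.Connected) (h2 : 2 ≤ G.ediam) :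
    ∀ t, (ILTG G t).Connected ∧ (ILTG G t).ediam = G.ediam := by
  intro t
  induction t with
  | zero => exact ⟨hc, rfl⟩
  | succ s ih =>
    refine ⟨ILT_connected ih.1, ?_⟩
    show (ILTstep (ILTG G s)).ediam = G.ediam
    rw [ILT_ediam_step ih.1 (ih.2 ▸ h2), ih.2]

lemma ILT_invariant_top [Nontrivial V] (hc : G.Connected) (htop : G = ⊤) :
    ∀ s, (ILTG G (s + 1)).Connected ∧ (ILTG G (s + 1)).ediam = 2 := by
  intro s
  haveI : Nontrivial (ILTV V 0) := ‹Nontrivial V›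
  induction s with
  | zero => exact ⟨ILT_connected hc, ILT_ediam_complete hc htop⟩
  | succ s ih =>
    refine ⟨ILT_connected ih.1, ?_⟩
    show (ILTstep (ILTG G (s + 1))).ediam = 2
    rw [ILT_ediam_step ih.1 (le_of_eq ih.2.symm), ih.2]

end Main

theorem ILT_diam [Fintype V] (G : SimpleGraph V) (hG : G.Connected) :
    (G ≠ ⊤ → ∀ t, (ILTG G t).diam = G.diam) ∧
    (G = ⊤ → 1 < Fintype.card V → ∀ t, 1 ≤ t → (ILTG G t).diam = 2) := by
  constructor
  · intro hne t
    haveI : Nontrivial V := by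
      by_contra hnt
      rw [not_nontrivial_iff_subsingleton] at hnt
      apply hne
      ext a b
      have hab : a = b := Subsingleton.elim a b
      simp only [top_adj]
      exact ⟨fun h => absurd hab h.ne, fun h => absurd hab h⟩
    have h2 : 2 ≤ G.ediam :=
      two_le_enat ediam_ne_zero (fun h1 => hne (ediam_eq_one.mp h1))
    exact congrArg ENat.toNat ((ILT_invariant_ne_top hG h2 t).2)
  · intro htop hcard t ht
    haveI : Nontrivial V := Fintype.one_lt_card_iff_nontrivial.mp hcard
    haveI : Nontrivial (ILTV V 0) := inferInstanceAs (Nontrivial V)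
    cases t with
    | zero => omega
    | succ s =>
      have := (ILT_invariant_top hG htop s).2
      show (ILTG G (s + 1)).ediam.toNat = 2
      rw [this]
      rfl
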